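/- (Corollary 2, Euclidean case) Let E be a real inner product space and run FTDL-RSC with losses that are γ-strongly convex in the classical sense (i.e., γ-strongly convex relative to ψ(x) = ½‖x‖², which is 1-strongly convex) and gradient bound ‖∇f_t(x)‖ ≤ G₂ on X. Then for every x* ∈ X, Reg_T := Σ_{t=1}^T f_t(x_t) − Σ_{t=1}^T f_t(x*) ≤ 3dG₂²(1 + ln T)/γ, where d := max_{1≤t≤T} d_t. -/

import Mathlib

open Finset


lemma aux_min_fderiv_nonneg {E : Type*} [NormedAddCommGroup E] [InnerProductSpace ℝ E]
    {X : Set E} (hX : Convex ℝ X) {φ : E → ℝ} (hφ : Differentiable ℝ φ)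
    {y z : E} (hy : y ∈ X) (hz : z ∈ X) (hmin : IsMinOn φ X y) :
    0 ≤ fderiv ℝ φ y (z - y) := by
  set v := z - y with hv
  have hline : ∀ θ : ℝ, 0 ≤ θ → θ ≤ 1 → y + θ • v ∈ X := by
    intro θ h0 h1
    have h2 := hX hy hz (by linarith : (0:ℝ) ≤ 1 - θ) h0 (by ring)
    have : y + θ • v = (1 - θ) • y + θ • z := by
      rw [hv]; rw [smul_sub]; rw [sub_smul]; simp; abel
    rw [this]; exact h2
  have hh : HasDerivAt (fun θ : ℝ => φ (y + θ • v)) (fderiv ℝ φ y v) 0 := by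
    have h1 : HasDerivAt (fun θ : ℝ => y + θ • v) v 0 := by
      simpa using ((hasDerivAt_id (0:ℝ)).smul_const v).const_add y
    have h2 : HasFDerivAt φ (fderiv ℝ φ y) (y + (0:ℝ) • v) := by
      simpa using (hφ y).hasFDerivAt
    exact h2.comp_hasDerivAt 0 h1
  set g : ℝ → ℝ := fun θ : ℝ => φ (y + θ • v) with hg
  have hslope : Filter.Tendsto (slope g 0) (nhdsWithin 0 (Set.Ioi 0 \ {0}))
      (nhds (fderiv ℝ φ y v)) := by
    have := (hh.hasDerivWithinAt (s := Set.Ioi 0))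
    exact hasDerivWithinAt_iff_tendsto_slope.mp this
  have hset : Set.Ioi (0:ℝ) \ {0} = Set.Ioi 0 := by
    apply Set.diff_singleton_eq_self; simp
  rw [hset] at hslope
  refine ge_of_tendsto hslope ?_
  have hmem : Set.Ioc (0:ℝ) 1 ∈ nhdsWithin 0 (Set.Ioi 0) :=
    Ioc_mem_nhdsGT_of_mem (by constructor <;> norm_num)
  filter_upwards [hmem] with θ hθ
  have hx : g θ ≥ g 0 := by
    have h0 : g 0 = φ y := by simp [hg]
    have := hmin (hline θ (le_of_lt hθ.1) hθ.2)
    simpa [h0] using this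
  have heq : slope g 0 θ = (g θ - g 0) / θ := by simp [slope_def_field]
  rw [heq]
  apply div_nonneg (by linarith) (le_of_lt hθ.1)

lemma aux_harmonic (c : ℕ → ℝ) (hc : ∀ i, 0 ≤ c i) (h1 : 1 ≤ c 1) :
    ∀ T, 1 ≤ T → ∑ t ∈ Icc 1 T, c t / (∑ τ ∈ Icc 1 t, c τ)
      ≤ 1 + Real.log (∑ τ ∈ Icc 1 T, c τ) := by
  have hn : ∀ t, 1 ≤ t → 1 ≤ ∑ τ ∈ Icc 1 t, c τ := by
    intro t ht
    calc (1:ℝ) ≤ c 1 := h1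
    _ ≤ ∑ τ ∈ Icc 1 t, c τ :=
      Finset.single_le_sum (fun i _ => hc i) (by simp [ht])
  intro T hT1
  induction T, hT1 using Nat.le_induction with
  | base =>
    simp only [show (Icc 1 1 : Finset ℕ) = {1} from rfl, Finset.sum_singleton]
    rw [div_self (by linarith : c 1 ≠ 0)]
    have := Real.log_nonneg h1
    linarith
  | succ T hT ih =>
    have h1T : (1:ℕ) ≤ T + 1 := by omega
    rw [Finset.sum_Icc_succ_top h1T]
    set N := ∑ τ ∈ Icc 1 T, c τ with hN
    have hNN : ∑ τ ∈ Icc 1 (T+1), c τ = N + c (T+1) := Finset.sum_Icc_succ_top h1T _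
    set N' := ∑ τ ∈ Icc 1 (T+1), c τ with hN'
    have hN1 : 1 ≤ N := hn T hT
    have hN'1 : 1 ≤ N' := hn (T+1) h1T
    have hkey : c (T+1) / N' ≤ Real.log N' - Real.log N := by
      have hpos : 0 < N / N' := div_pos (by linarith) (by linarith)
      have := Real.log_le_sub_one_of_pos hpos
      rw [Real.log_div (by linarith) (by linarith)] at this
      have h2 : N / N' - 1 = -(c (T+1) / N') := by
        field_simp
        linarith [hNN]
      rw [h2] at this
      linarith
    have hsum : ∑ t ∈ Icc 1 T, c t / (∑ τ ∈ Icc 1 t, c τ) ≤ 1 + Real.log N := ih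
    linarith


set_option maxHeartbeats 2000000 in
/-- Corollary 2 (Euclidean case): FTDL-RSC with classically `γ`-strongly convex losses
attains regret at most `3dG₂²(1 + ln T)/γ`. -/
theorem ftdl_rsc_euclidean_regret
    {E : Type*} [NormedAddCommGroup E] [InnerProductSpace ℝ E]
    (X : Set E) (hXne : X.Nonempty) (hX : Convex ℝ X)
    (T : ℕ) (hT : 1 ≤ T) (d : ℕ → ℕ)
    (hd : ∀ t ∈ Finset.Icc 1 T, 1 ≤ d t ∧ t + d t - 1 ≤ T)
    (F : ℕ → Finset ℕ)
    (hF : ∀ t, F t = (Finset.Icc 1 T).filter (fun k => k + d k - 1 = t))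
    (hF1 : (F 1).Nonempty)
    (f : ℕ → E → ℝ) (G₂ : ℝ)
    (hfdiff : ∀ t ∈ Finset.Icc 1 T, Differentiable ℝ (f t))
    (hG : ∀ t ∈ Finset.Icc 1 T, ∀ z ∈ X, ‖fderiv ℝ (f t) z‖ ≤ G₂)
    (γ : ℝ) (hγ : 0 < γ)
    (hsc : ∀ t ∈ Finset.Icc 1 T, ∀ a ∈ X, ∀ b ∈ X,
      f t a - f t b - fderiv ℝ (f t) b (a - b) ≥ γ / 2 * ‖a - b‖ ^ 2)
    (Fb : ℕ → E → ℝ)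
    (hFb : ∀ t z, Fb t z = ∑ τ ∈ Finset.Icc 1 t, ∑ k ∈ F τ, f k z)
    (x : ℕ → E) (hx1 : x 1 ∈ X)
    (hupd : ∀ t ∈ Finset.Icc 1 T, (F t).Nonempty →
      x (t + 1) ∈ X ∧ ∃ ystar ∈ X, IsMinOn (Fb t) X ystar ∧
        Fb t (x (t + 1)) ≤ Fb t ystar
          + ((F t).card : ℝ) ^ 2 * G₂ ^ 2
            / (8 * γ * ∑ τ ∈ Finset.Icc 1 t, ((F τ).card : ℝ)))
    (hupd0 : ∀ t ∈ Finset.Icc 1 T, F t = ∅ → x (t + 1) = x t) :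
    ∀ xstar ∈ X,
      ∑ t ∈ Finset.Icc 1 T, f t (x t) - ∑ t ∈ Finset.Icc 1 T, f t xstar
        ≤ 3 * (((Finset.Icc 1 T).sup d : ℕ) : ℝ) * G₂ ^ 2 * (1 + Real.log T)
            / γ := by
  intro xstar hxstar
  -- notation
  set tau : ℕ → ℕ := fun k => k + d k - 1 with htau
  set dbar : ℕ := (Finset.Icc 1 T).sup d with hdbar
  set U : ℕ → Finset ℕ := fun t => (Finset.Icc 1 T).filter (fun k => tau k ≤ t) with hU
  set nR : ℕ → ℝ := fun t => ((U t).card : ℝ) with hnR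
  set c : ℕ → ℝ := fun s => ((F s).card : ℝ) with hc
  set L : ℕ → ℕ := fun t => ((Finset.Icc 1 t).filter (fun s => (F s).Nonempty)).sup id with hL
  -- basic index facts
  have hdle : ∀ k ∈ Finset.Icc 1 T, d k ≤ dbar := fun k hk => Finset.le_sup hk
  have hdbar1 : 1 ≤ dbar := le_trans (hd 1 (by simp [hT])).1 (hdle 1 (by simp [hT]))
  have htauk : ∀ k ∈ Finset.Icc 1 T, k ≤ tau k ∧ 1 ≤ tau k ∧ tau k ≤ T ∧ tau k + 1 ≤ k + dbar := by
    intro k hk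
    have h1 := (hd k hk).1
    have h2 := (hd k hk).2
    have h3 := hdle k hk
    have hk1 : 1 ≤ k := (Finset.mem_Icc.mp hk).1
    simp only [htau]
    omega
  have hFmem : ∀ t k, k ∈ F t ↔ (k ∈ Finset.Icc 1 T ∧ tau k = t) := by
    intro t k; rw [hF]; simp [Finset.mem_filter, htau]
  have hUmem : ∀ t k, k ∈ U t ↔ (k ∈ Finset.Icc 1 T ∧ tau k ≤ t) := by
    intro t k; simp [hU, Finset.mem_filter]
  have hUmono : ∀ s t, s ≤ t → U s ⊆ U t := by
    intro s t hst k hk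
    rw [hUmem] at hk ⊢
    exact ⟨hk.1, le_trans hk.2 hst⟩
  have hUT : U T = Finset.Icc 1 T := by
    ext k
    rw [hUmem]
    exact ⟨fun h => h.1, fun h => ⟨h, (htauk k h).2.2.1⟩⟩
  have hUne : ∀ t, 1 ≤ t → (U t).Nonempty := by
    intro t ht
    obtain ⟨k, hk⟩ := hF1
    rw [hFmem] at hk
    exact ⟨k, (hUmem t k).mpr ⟨hk.1, by omega⟩⟩
  have hUsub : ∀ t, U t ⊆ Finset.Icc 1 t := by
    intro t k hk
    rw [hUmem] at hk
    have := (htauk k hk.1).1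
    have := (Finset.mem_Icc.mp hk.1).1
    rw [Finset.mem_Icc]
    omega
  have hn1 : ∀ t, 1 ≤ t → 1 ≤ nR t := by
    intro t ht
    have := Finset.card_pos.mpr (hUne t ht)
    simp only [hnR]
    exact_mod_cast this
  have hnmono : ∀ s t, s ≤ t → nR s ≤ nR t := by
    intro s t hst
    simp only [hnR]
    exact_mod_cast Finset.card_le_card (hUmono s t hst)
  have hnT : nR T = (T : ℝ) := by
    simp only [hnR, hUT, Nat.card_Icc]
    norm_num
  -- fiberwise identities
  have hUfib : ∀ t, ∀ τ' ∈ Finset.Icc 1 t, (U t).filter (fun k => tau k = τ') = F τ' := by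
    intro t τ' hτ'
    have hτt := (Finset.mem_Icc.mp hτ').2
    ext k
    rw [Finset.mem_filter, hUmem, hFmem]
    constructor
    · rintro ⟨⟨h1, _⟩, h3⟩; exact ⟨h1, h3⟩
    · rintro ⟨h1, h2⟩; exact ⟨⟨h1, by omega⟩, h2⟩
  have hmaps : ∀ t, ∀ k ∈ U t, tau k ∈ Finset.Icc 1 t := by
    intro t k hk
    rw [hUmem] at hk
    have := (htauk k hk.1).2.1
    rw [Finset.mem_Icc]
    exact ⟨this, hk.2⟩
  have hFbU : ∀ t z, Fb t z = ∑ k ∈ U t, f k z := by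
    intro t z
    rw [hFb]
    rw [← Finset.sum_fiberwise_of_maps_to (hmaps t) (fun k => f k z)]
    apply Finset.sum_congr rfl
    intro τ' hτ'
    rw [hUfib t τ' hτ']
  have hcard : ∀ t, ∑ τ' ∈ Finset.Icc 1 t, c τ' = nR t := by
    intro t
    simp only [hc, hnR]
    rw [← Nat.cast_sum]
    congr 1
    rw [Finset.card_eq_sum_card_fiberwise (hmaps t)]
    apply Finset.sum_congr rfl
    intro τ' hτ'
    rw [hUfib t τ' hτ']
  have hpart : ∀ (g : ℕ → ℝ),
      ∑ t ∈ Finset.Icc 1 T, ∑ k ∈ F t, g k = ∑ k ∈ Finset.Icc 1 T, g k := by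
    intro g
    have : ∀ t ∈ Finset.Icc 1 T, ∑ k ∈ F t, g k
        = ∑ k ∈ (Finset.Icc 1 T).filter (fun k => tau k = t), g k := by
      intro t ht
      congr 1
      rw [hF]
    rw [Finset.sum_congr rfl this]
    apply Finset.sum_fiberwise_of_maps_to
    intro k hk
    have := htauk k hk
    rw [Finset.mem_Icc]
    omega
  -- analytic facts
  have hG20 : 0 ≤ G₂ := by
    obtain ⟨z, hz⟩ := hXne
    exact le_trans (norm_nonneg _) (hG 1 (by simp [hT]) z hz)
  have hLip : ∀ k ∈ Finset.Icc 1 T, ∀ a ∈ X, ∀ b ∈ X, f k a - f k b ≤ G₂ * ‖a - b‖ := by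
    intro k hk a ha b hb
    have h1 := hsc k hk b hb a ha
    have h2 : (0:ℝ) ≤ γ / 2 * ‖b - a‖ ^ 2 := by positivity
    have h3 : f k a - f k b ≤ fderiv ℝ (f k) a (a - b) := by
      have : fderiv ℝ (f k) a (a - b) = - fderiv ℝ (f k) a (b - a) := by
        rw [← ContinuousLinearMap.map_neg]
        congr 1
        abel
      rw [this]
      linarith
    have h4 : fderiv ℝ (f k) a (a - b) ≤ ‖fderiv ℝ (f k) a‖ * ‖a - b‖ := by
      refine le_trans (le_abs_self _) ?_
      rw [← Real.norm_eq_abs]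
      exact ContinuousLinearMap.le_opNorm _ _
    have h5 : ‖fderiv ℝ (f k) a‖ * ‖a - b‖ ≤ G₂ * ‖a - b‖ :=
      mul_le_mul_of_nonneg_right (hG k hk a ha) (norm_nonneg _)
    linarith
  have hLipSum : ∀ s, ∀ a ∈ X, ∀ b ∈ X,
      (∑ k ∈ F s, f k a) - (∑ k ∈ F s, f k b) ≤ c s * G₂ * ‖a - b‖ := by
    intro s a ha b hb
    rw [← Finset.sum_sub_distrib]
    have : ∀ k ∈ F s, f k a - f k b ≤ G₂ * ‖a - b‖ := by
      intro k hk
      exact hLip k ((hFmem s k).mp hk).1 a ha b hb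
    calc ∑ k ∈ F s, (f k a - f k b) ≤ ∑ _k ∈ F s, G₂ * ‖a - b‖ := Finset.sum_le_sum this
    _ = c s * G₂ * ‖a - b‖ := by
      rw [Finset.sum_const, nsmul_eq_mul, hc]
      ring
  have hdiam : ∀ a ∈ X, ∀ b ∈ X, ‖a - b‖ ≤ 2 * G₂ / γ := by
    intro a ha b hb
    have h1 := hsc 1 (by simp [hT]) a ha b hb
    have h2 := hsc 1 (by simp [hT]) b hb a ha
    have hba : ‖b - a‖ = ‖a - b‖ := norm_sub_rev b a
    rw [hba] at h2
    have h3 : fderiv ℝ (f 1) a (b - a) = - fderiv ℝ (f 1) a (a - b) := by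
      rw [← ContinuousLinearMap.map_neg]; congr 1; abel
    rw [h3] at h2
    have h4 : fderiv ℝ (f 1) a (a - b) ≤ G₂ * ‖a - b‖ := by
      refine le_trans (le_trans (le_abs_self _) ?_)
        (mul_le_mul_of_nonneg_right (hG 1 (by simp [hT]) a ha) (norm_nonneg _))
      rw [← Real.norm_eq_abs]
      exact ContinuousLinearMap.le_opNorm _ _
    have h5 : - fderiv ℝ (f 1) b (a - b) ≤ G₂ * ‖a - b‖ := by
      refine le_trans (le_trans (neg_le_abs _) ?_)
        (mul_le_mul_of_nonneg_right (hG 1 (by simp [hT]) b hb) (norm_nonneg _))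
      rw [← Real.norm_eq_abs]
      exact ContinuousLinearMap.le_opNorm _ _
    -- γ ‖a-b‖² ≤ 2 G₂ ‖a-b‖
    have hkey : γ * ‖a - b‖ ^ 2 ≤ 2 * G₂ * ‖a - b‖ := by linarith
    rcases eq_or_lt_of_le (norm_nonneg (a - b)) with h0 | h0
    · rw [← h0]; positivity
    · rw [le_div_iff₀ hγ]
      nlinarith
  have hUIcc : ∀ t, ∀ k ∈ U t, k ∈ Finset.Icc 1 T := fun t k hk => ((hUmem t k).mp hk).1
  have hFbdiff : ∀ t, Differentiable ℝ (Fb t) := by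
    intro t
    have : Fb t = fun z => ∑ k ∈ U t, f k z := funext (hFbU t)
    rw [this]
    exact Differentiable.fun_sum (fun k hk => hfdiff k (hUIcc t k hk))
  have hFbsc : ∀ t, ∀ a ∈ X, ∀ b ∈ X,
      γ * nR t / 2 * ‖a - b‖ ^ 2 ≤ Fb t a - Fb t b - fderiv ℝ (Fb t) b (a - b) := by
    intro t a ha b hb
    have hfe : Fb t = fun z => ∑ k ∈ U t, f k z := funext (hFbU t)
    have hfd : fderiv ℝ (Fb t) b = ∑ k ∈ U t, fderiv ℝ (f k) b := by
      rw [hfe]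
      exact fderiv_fun_sum (fun k hk => (hfdiff k (hUIcc t k hk)).differentiableAt)
    have hsum : Fb t a - Fb t b - fderiv ℝ (Fb t) b (a - b)
        = ∑ k ∈ U t, (f k a - f k b - fderiv ℝ (f k) b (a - b)) := by
      rw [hfd, hfe]
      simp only [ContinuousLinearMap.coe_sum', Finset.sum_apply]
      rw [Finset.sum_sub_distrib, Finset.sum_sub_distrib]
    rw [hsum]
    calc γ * nR t / 2 * ‖a - b‖ ^ 2 = (U t).card • (γ / 2 * ‖a - b‖ ^ 2) := by
          rw [nsmul_eq_mul, hnR]; ring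
    _ = ∑ _k ∈ U t, γ / 2 * ‖a - b‖ ^ 2 := by rw [Finset.sum_const]
    _ ≤ ∑ k ∈ U t, (f k a - f k b - fderiv ℝ (f k) b (a - b)) :=
        Finset.sum_le_sum (fun k hk => hsc k (hUIcc t k hk) a ha b hb)
  -- facts about L (last feedback time)
  have hLfilt : ∀ t, 1 ≤ t → ((Finset.Icc 1 t).filter (fun s => (F s).Nonempty)).Nonempty := by
    intro t ht
    exact ⟨1, Finset.mem_filter.mpr ⟨Finset.mem_Icc.mpr ⟨le_refl 1, ht⟩, hF1⟩⟩
  have hLmem : ∀ t, 1 ≤ t → (1 ≤ L t ∧ L t ≤ t ∧ (F (L t)).Nonempty) := by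
    intro t ht
    obtain ⟨b, hb, hbe⟩ := Finset.exists_mem_eq_sup _ (hLfilt t ht) (id : ℕ → ℕ)
    have hLb : L t = b := hbe
    rw [Finset.mem_filter, Finset.mem_Icc] at hb
    exact ⟨by omega, by omega, by rw [hLb]; exact hb.2⟩
  have hLle : ∀ t s, (F s).Nonempty → 1 ≤ s → s ≤ t → s ≤ L t := by
    intro t s hs h1 h2
    exact Finset.le_sup (f := (id : ℕ → ℕ))
      (Finset.mem_filter.mpr ⟨Finset.mem_Icc.mpr ⟨h1, h2⟩, hs⟩)
  have hLgap : ∀ t ∈ Finset.Icc 1 T, t < L t + dbar := by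
    intro t ht
    rw [Finset.mem_Icc] at ht
    by_contra hcon
    push_neg at hcon
    set k₀ := L t + 1 with hk₀
    have hL := hLmem t ht.1
    have hk₀T : k₀ ∈ Finset.Icc 1 T := by
      rw [Finset.mem_Icc]
      omega
    have htk := htauk k₀ hk₀T
    have htle : tau k₀ ≤ t := by omega
    have hk₀F : k₀ ∈ F (tau k₀) := (hFmem _ k₀).mpr ⟨hk₀T, rfl⟩
    have : tau k₀ ≤ L t := hLle t (tau k₀) ⟨k₀, hk₀F⟩ (by omega) htle
    omega
  have hLeq : ∀ t, 1 ≤ t → (F (t+1) = ∅) → L (t+1) = L t := by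
    intro t ht hFe
    simp only [hL]
    congr 1
    ext s
    simp only [Finset.mem_filter, Finset.mem_Icc]
    constructor
    · rintro ⟨⟨h1, h2⟩, h3⟩
      refine ⟨⟨h1, ?_⟩, h3⟩
      rcases Nat.lt_or_ge s (t+1) with h | h
      · omega
      · exfalso
        have : s = t + 1 := by omega
        rw [this] at h3
        rw [hFe] at h3
        exact Finset.not_nonempty_empty h3
    · rintro ⟨⟨h1, h2⟩, h3⟩
      exact ⟨⟨h1, by omega⟩, h3⟩
  have hUeq : ∀ t, (F (t+1) = ∅) → U (t+1) = U t := by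
    intro t hFe
    ext k
    rw [hUmem, hUmem]
    constructor
    · rintro ⟨h1, h2⟩
      refine ⟨h1, ?_⟩
      rcases Nat.lt_or_ge (tau k) (t+1) with h | h
      · omega
      · exfalso
        have he : tau k = t + 1 := by omega
        have : k ∈ F (t+1) := (hFmem _ k).mpr ⟨h1, he⟩
        rw [hFe] at this
        simp at this
    · rintro ⟨h1, h2⟩
      exact ⟨h1, by omega⟩
  have hFbeq : ∀ t, (F (t+1) = ∅) → Fb (t+1) = Fb t := by
    intro t hFe
    funext z
    rw [hFb, hFb, Finset.sum_Icc_succ_top (by omega : 1 ≤ t + 1)]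
    rw [hFe]
    simp
  -- existence of minimizers and choice of Y
  have hEx : ∀ t, ∃ y, t ∈ Finset.Icc 1 T → (y ∈ X ∧ IsMinOn (Fb t) X y) := by
    have key : ∀ t, 1 ≤ t → t ≤ T → ∃ y, y ∈ X ∧ IsMinOn (Fb t) X y := by
      intro t ht1
      induction t, ht1 using Nat.le_induction with
      | base =>
        intro _
        obtain ⟨_, ystar, hyX, hymin, _⟩ := hupd 1 (by simp [hT]) hF1
        exact ⟨ystar, hyX, hymin⟩
      | succ t ht ih =>
        intro htT
        rcases (F (t+1)).eq_empty_or_nonempty with he | hne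
        · obtain ⟨y, hyX, hymin⟩ := ih (by omega)
          exact ⟨y, hyX, by rw [hFbeq t he]; exact hymin⟩
        · obtain ⟨_, ystar, hyX, hymin, _⟩ := hupd (t+1) (Finset.mem_Icc.mpr ⟨by omega, htT⟩) hne
          exact ⟨ystar, hyX, hymin⟩
    intro t
    rcases Classical.em (t ∈ Finset.Icc 1 T) with h | h
    · rw [Finset.mem_Icc] at h
      obtain ⟨y, hy⟩ := key t h.1 h.2
      exact ⟨y, fun _ => hy⟩
    · exact ⟨x 1, fun ht => absurd ht h⟩
  choose Y hY using hEx
  have hYX : ∀ t ∈ Finset.Icc 1 T, Y t ∈ X := fun t ht => (hY t ht).1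
  have hYmin : ∀ t ∈ Finset.Icc 1 T, IsMinOn (Fb t) X (Y t) := fun t ht => (hY t ht).2
  -- the approximation invariant
  have hA : ∀ t, 1 ≤ t → t ≤ T → x (t+1) ∈ X ∧
      Fb t (x (t+1)) ≤ Fb t (Y t) + c (L t) ^ 2 * G₂ ^ 2 / (8 * γ * nR t) := by
    intro t ht1
    induction t, ht1 using Nat.le_induction with
    | base =>
      intro htT
      obtain ⟨hxX, ystar, hyX, hymin, hval⟩ := hupd 1 (by simp [hT]) hF1
      have hL1 : L 1 = 1 := by
        have := hLmem 1 (le_refl 1)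
        omega
      refine ⟨hxX, ?_⟩
      rw [hL1]
      have h1 : Fb 1 ystar ≤ Fb 1 (Y 1) := hymin (hYX 1 (by simp [hT]))
      rw [hcard 1] at hval
      simp only [hc]
      linarith
    | succ t ht ih =>
      intro htT
      rcases (F (t+1)).eq_empty_or_nonempty with he | hne
      · obtain ⟨hxX, hble⟩ := ih (by omega)
        have hxeq : x (t+2) = x (t+1) := hupd0 (t+1) (Finset.mem_Icc.mpr ⟨by omega, htT⟩) he
        have hFbe := hFbeq t he
        have hYe : Fb t (Y (t+1)) = Fb t (Y t) := by
          have h1 : Fb t (Y t) ≤ Fb t (Y (t+1)) :=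
            hYmin t (Finset.mem_Icc.mpr ⟨by omega, by omega⟩)
              (hYX (t+1) (Finset.mem_Icc.mpr ⟨by omega, htT⟩))
          have h2 : Fb (t+1) (Y (t+1)) ≤ Fb (t+1) (Y t) :=
            hYmin (t+1) (Finset.mem_Icc.mpr ⟨by omega, htT⟩)
              (hYX t (Finset.mem_Icc.mpr ⟨by omega, by omega⟩))
          rw [hFbe] at h2
          linarith
        refine ⟨by rw [hxeq]; exact hxX, ?_⟩
        have hnr' : nR (t+1) = nR t := by simp only [hnR]; rw [hUeq t he]
        rw [hxeq, hFbe, hYe, hLeq t (by omega) he, hnr']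
        exact hble
      · obtain ⟨hxX, ystar, hyX, hymin, hval⟩ :=
          hupd (t+1) (Finset.mem_Icc.mpr ⟨by omega, htT⟩) hne
        have hLt : L (t+1) = t + 1 := by
          have h1 := hLle (t+1) (t+1) hne (by omega) (le_refl _)
          have h2 := hLmem (t+1) (by omega)
          omega
        refine ⟨hxX, ?_⟩
        rw [hLt]
        have h1 : Fb (t+1) ystar ≤ Fb (t+1) (Y (t+1)) :=
          hymin (hYX (t+1) (Finset.mem_Icc.mpr ⟨by omega, htT⟩))
        rw [hcard (t+1)] at hval
        simp only [hc]
        linarith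
  set step : ℕ → ℝ := fun s => 2 * c s * G₂ / (γ * nR s) with hstep
  have hc0 : ∀ s, 0 ≤ c s := fun s => by simp [hc]
  have hstep0 : ∀ s, 1 ≤ s → 0 ≤ step s := by
    intro s hs
    have h2 : (0:ℝ) ≤ nR s := le_trans zero_le_one (hn1 s hs)
    simp only [hstep]
    exact div_nonneg (mul_nonneg (mul_nonneg (by norm_num) (hc0 s)) hG20)
      (mul_nonneg (le_of_lt hγ) h2)
  -- quadratic growth at the minimizer
  have hQG : ∀ t ∈ Finset.Icc 1 T, ∀ a ∈ X,
      γ * nR t / 2 * ‖a - Y t‖ ^ 2 ≤ Fb t a - Fb t (Y t) := by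
    intro t ht a ha
    have h1 := hFbsc t a ha (Y t) (hYX t ht)
    have h2 : 0 ≤ fderiv ℝ (Fb t) (Y t) (a - Y t) :=
      aux_min_fderiv_nonneg hX (hFbdiff t) (hYX t ht) ha (hYmin t ht)
    linarith
  -- shift of consecutive minimizers
  have hshift : ∀ s, 1 ≤ s → s + 1 ≤ T → ‖Y s - Y (s+1)‖ ≤ step (s+1) := by
    intro s hs1 hsT
    have hsI : s ∈ Finset.Icc 1 T := Finset.mem_Icc.mpr ⟨hs1, by omega⟩
    have hsI' : s + 1 ∈ Finset.Icc 1 T := Finset.mem_Icc.mpr ⟨by omega, hsT⟩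
    set r := ‖Y s - Y (s+1)‖ with hr
    have hr0 : 0 ≤ r := norm_nonneg _
    have hq : γ * nR (s+1) / 2 * r ^ 2 ≤ Fb (s+1) (Y s) - Fb (s+1) (Y (s+1)) := by
      have := hQG (s+1) hsI' (Y s) (hYX s hsI)
      simpa [hr] using this
    have hsplit : ∀ z, Fb (s+1) z = Fb s z + ∑ k ∈ F (s+1), f k z := by
      intro z
      rw [hFb, hFb, Finset.sum_Icc_succ_top (by omega : 1 ≤ s + 1)]
    have hmin : Fb s (Y s) ≤ Fb s (Y (s+1)) := hYmin s hsI (hYX (s+1) hsI')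
    have hlip := hLipSum (s+1) (Y s) (hYX s hsI) (Y (s+1)) (hYX (s+1) hsI')
    have hkey : γ * nR (s+1) / 2 * r ^ 2 ≤ c (s+1) * G₂ * r := by
      rw [hsplit (Y s), hsplit (Y (s+1))] at hq
      rw [← hr] at hlip
      linarith
    have hnpos : 0 < nR (s+1) := lt_of_lt_of_le zero_lt_one (hn1 (s+1) (by omega))
    rcases eq_or_lt_of_le hr0 with h0 | h0
    · rw [← h0]
      exact hstep0 (s+1) (by omega)
    · simp only [hstep]
      rw [le_div_iff₀ (mul_pos hγ hnpos)]
      nlinarith [hc0 (s+1)]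
  -- path bound between minimizers
  have hYpath : ∀ a, 1 ≤ a → ∀ b, a ≤ b → b ≤ T →
      ‖Y a - Y b‖ ≤ ∑ s ∈ Finset.Icc (a+1) b, step s := by
    intro a ha1 b hab
    induction b, hab using Nat.le_induction with
    | base =>
      intro _
      rw [Finset.Icc_eq_empty (by omega)]
      simp
    | succ b hb ih =>
      intro hbT
      have h1 : ‖Y a - Y (b+1)‖ ≤ ‖Y a - Y b‖ + ‖Y b - Y (b+1)‖ := by
        have : Y a - Y (b+1) = (Y a - Y b) + (Y b - Y (b+1)) := by abel
        rw [this]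
        exact norm_add_le _ _
      have h2 := ih (by omega)
      have h3 := hshift b (by omega) hbT
      rw [Finset.sum_Icc_succ_top (by omega : a + 1 ≤ b + 1)]
      linarith
  -- distance from iterate to current minimizer
  have hdistx : ∀ t, 1 ≤ t → t ≤ T →
      ‖x (t+1) - Y t‖ ≤ c (L t) * G₂ / (2 * γ * nR t) := by
    intro t ht1 htT
    have htI : t ∈ Finset.Icc 1 T := Finset.mem_Icc.mpr ⟨ht1, htT⟩
    obtain ⟨hxX, hble⟩ := hA t ht1 htT
    set r := ‖x (t+1) - Y t‖ with hr
    have hr0 : 0 ≤ r := norm_nonneg _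
    have hq : γ * nR t / 2 * r ^ 2 ≤ c (L t) ^ 2 * G₂ ^ 2 / (8 * γ * nR t) := by
      have := hQG t htI (x (t+1)) hxX
      simp only [← hr] at this
      linarith
    have hnpos : 0 < nR t := lt_of_lt_of_le zero_lt_one (hn1 t ht1)
    have hA2 : r ^ 2 ≤ (c (L t) * G₂ / (2 * γ * nR t)) ^ 2 := by
      have h8 : (0:ℝ) < 8 * γ * nR t := by
        have : (0:ℝ) < 8 * γ := by linarith
        exact mul_pos this hnpos
      have h3 := (le_div_iff₀ h8).mp (le_trans hq (le_refl _))
      have h9 : (0:ℝ) < (2 * γ * nR t) ^ 2 :=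
        pow_pos (mul_pos (mul_pos two_pos hγ) hnpos) 2
      rw [div_pow, le_div_iff₀ h9]
      calc r ^ 2 * (2 * γ * nR t) ^ 2 = γ * nR t / 2 * r ^ 2 * (8 * γ * nR t) := by ring
      _ ≤ c (L t) ^ 2 * G₂ ^ 2 := h3
      _ = (c (L t) * G₂) ^ 2 := by ring
    have hrhs0 : 0 ≤ c (L t) * G₂ / (2 * γ * nR t) :=
      div_nonneg (mul_nonneg (hc0 (L t)) hG20)
        (le_of_lt (mul_pos (mul_pos two_pos hγ) hnpos))
    calc r = Real.sqrt (r ^ 2) := (Real.sqrt_sq hr0).symm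
    _ ≤ Real.sqrt ((c (L t) * G₂ / (2 * γ * nR t)) ^ 2) := Real.sqrt_le_sqrt hA2
    _ = c (L t) * G₂ / (2 * γ * nR t) := Real.sqrt_sq hrhs0
  -- the per-round bound
  have hperk : ∀ k ∈ Finset.Icc 1 T, f k (x k) - f k (Y (tau k))
      ≤ G₂ * ((if k = 1 then 0 else c (L (k-1)) * G₂ / (2 * γ * nR (k-1)))
        + ∑ s ∈ Finset.Icc k (tau k), step s) := by
    intro k hk
    have hkIcc := hk
    rw [Finset.mem_Icc] at hk
    have hτ := htauk k hkIcc
    have hτIcc : tau k ∈ Finset.Icc 1 T := Finset.mem_Icc.mpr ⟨hτ.2.1, hτ.2.2.1⟩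
    rcases eq_or_lt_of_le hk.1 with h1 | h1
    · -- k = 1
      have hk1 : k = 1 := h1.symm
      subst hk1
      have hU1 : U 1 = F 1 := by
        ext j
        rw [hUmem, hFmem]
        constructor
        · rintro ⟨hj1, hj2⟩
          exact ⟨hj1, by have := (htauk j hj1).2.1; omega⟩
        · rintro ⟨hj1, hj2⟩
          exact ⟨hj1, by omega⟩
      have hc1pos : (0:ℝ) < c 1 := by
        simp only [hc]
        exact_mod_cast Finset.card_pos.mpr hF1
      have hstep1 : step 1 = 2 * G₂ / γ := by
        simp only [hstep, hnR, hU1, ← hc]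
        field_simp
        ring
      have hstart : ‖x 1 - Y 1‖ ≤ step 1 := by
        rw [hstep1]
        exact hdiam (x 1) hx1 (Y 1) (hYX 1 (by simp [hT]))
      have htri : ‖x 1 - Y (tau 1)‖ ≤ ‖x 1 - Y 1‖ + ‖Y 1 - Y (tau 1)‖ := by
        have : x 1 - Y (tau 1) = (x 1 - Y 1) + (Y 1 - Y (tau 1)) := by abel
        rw [this]; exact norm_add_le _ _
      have hp := hYpath 1 (le_refl 1) (tau 1) hτ.2.1 hτ.2.2.1
      have hsum : ∑ s ∈ Finset.Icc 1 (tau 1), step s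
          = step 1 + ∑ s ∈ Finset.Icc 2 (tau 1), step s := by
        have hins : Finset.Icc 1 (tau 1) = insert 1 (Finset.Icc 2 (tau 1)) := by
          ext j
          simp only [Finset.mem_Icc, Finset.mem_insert]
          have := hτ.2.1
          omega
        rw [hins, Finset.sum_insert (by simp)]
      have hdz : ‖x 1 - Y (tau 1)‖ ≤ ∑ s ∈ Finset.Icc 1 (tau 1), step s := by
        rw [hsum]
        have : (1:ℕ) + 1 = 2 := rfl
        rw [this] at hp
        linarith
      have hLipk := hLip 1 hkIcc (x 1) hx1 (Y (tau 1)) (hYX (tau 1) hτIcc)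
      have hfin : f 1 (x 1) - f 1 (Y (tau 1)) ≤ G₂ * ∑ s ∈ Finset.Icc 1 (tau 1), step s :=
        le_trans hLipk (mul_le_mul_of_nonneg_left hdz hG20)
      simpa using hfin
    · -- k ≥ 2
      obtain ⟨t, rfl⟩ : ∃ t, k = t + 1 := ⟨k - 1, by omega⟩
      have ht1 : 1 ≤ t := by omega
      have hxk : x (t+1) ∈ X := (hA t ht1 (by omega)).1
      have hd1 := hdistx t ht1 (by omega)
      have hp := hYpath t ht1 (tau (t+1)) (by omega) hτ.2.2.1
      have htri : ‖x (t+1) - Y (tau (t+1))‖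
          ≤ ‖x (t+1) - Y t‖ + ‖Y t - Y (tau (t+1))‖ := by
        have : x (t+1) - Y (tau (t+1)) = (x (t+1) - Y t) + (Y t - Y (tau (t+1))) := by abel
        rw [this]; exact norm_add_le _ _
      have hLipk := hLip (t+1) hkIcc (x (t+1)) hxk (Y (tau (t+1))) (hYX (tau (t+1)) hτIcc)
      have hif : (if t + 1 = 1 then (0:ℝ) else c (L (t+1-1)) * G₂ / (2 * γ * nR (t+1-1)))
          = c (L t) * G₂ / (2 * γ * nR t) := by
        rw [if_neg (by omega)]
        simp only [Nat.add_sub_cancel]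
      rw [hif]
      calc f (t+1) (x (t+1)) - f (t+1) (Y (tau (t+1)))
          ≤ G₂ * ‖x (t+1) - Y (tau (t+1))‖ := hLipk
      _ ≤ G₂ * (c (L t) * G₂ / (2 * γ * nR t) + ∑ s ∈ Finset.Icc (t+1) (tau (t+1)), step s) := by
          apply mul_le_mul_of_nonneg_left _ hG20
          linarith
  -- be-the-leader bound
  have hBTL : ∀ t, t ≤ T → ∀ z ∈ X,
      ∑ τ' ∈ Finset.Icc 1 t, ∑ k ∈ F τ', f k (Y τ') ≤ Fb t z := by
    intro t
    induction t with
    | zero =>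
      intro _ z hz
      rw [hFb]
      simp
    | succ t ih =>
      intro htT z hz
      have htI : t + 1 ∈ Finset.Icc 1 T := Finset.mem_Icc.mpr ⟨by omega, htT⟩
      have h1 := ih (by omega) (Y (t+1)) (hYX (t+1) htI)
      have h2 : Fb (t+1) (Y (t+1)) ≤ Fb (t+1) z := hYmin (t+1) htI hz
      have h3 : ∀ w, Fb (t+1) w = Fb t w + ∑ k ∈ F (t+1), f k w := by
        intro w
        rw [hFb, hFb, Finset.sum_Icc_succ_top (by omega : 1 ≤ t + 1)]
      rw [Finset.sum_Icc_succ_top (by omega : 1 ≤ t + 1)]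
      rw [h3 (Y (t+1))] at h2
      linarith
  -- harmonic sum bound
  set H : ℝ := ∑ s ∈ Finset.Icc 1 T, c s / nR s with hH
  have hc1 : (1:ℝ) ≤ c 1 := by
    simp only [hc]
    exact_mod_cast Nat.one_le_iff_ne_zero.mpr (Finset.card_ne_zero_of_mem hF1.choose_spec)
  have hHle : H ≤ 1 + Real.log T := by
    have hh := aux_harmonic c hc0 hc1 T hT
    have e1 : ∀ t ∈ Finset.Icc 1 T, c t / (∑ τ' ∈ Finset.Icc 1 t, c τ') = c t / nR t := by
      intro t _
      rw [hcard t]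
    rw [Finset.sum_congr rfl e1, hcard T, hnT] at hh
    exact hh
  have hH0 : 0 ≤ H := by
    apply Finset.sum_nonneg
    intro s hs
    have : (0:ℝ) ≤ nR s := le_trans zero_le_one (hn1 s (Finset.mem_Icc.mp hs).1)
    exact div_nonneg (hc0 s) this
  -- sum of steps
  have hSstep : ∑ s ∈ Finset.Icc 1 T, step s = 2 * G₂ / γ * H := by
    rw [hH, Finset.mul_sum]
    apply Finset.sum_congr rfl
    intro s hs
    have hns : (0:ℝ) < nR s := lt_of_lt_of_le zero_lt_one (hn1 s (Finset.mem_Icc.mp hs).1)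
    simp only [hstep]
    field_simp
  -- head-term sum bound
  set g : ℕ → ℝ := fun s => c s * G₂ / (2 * γ * nR s) with hg
  have hg0 : ∀ s, 1 ≤ s → 0 ≤ g s := by
    intro s hs
    have : (0:ℝ) ≤ nR s := le_trans zero_le_one (hn1 s hs)
    simp only [hg]
    exact div_nonneg (mul_nonneg (hc0 s) hG20) (by nlinarith)
  have hSg : ∑ s ∈ Finset.Icc 1 T, g s = G₂ / (2 * γ) * H := by
    rw [hH, Finset.mul_sum]
    apply Finset.sum_congr rfl
    intro s hs
    have hns : (0:ℝ) < nR s := lt_of_lt_of_le zero_lt_one (hn1 s (Finset.mem_Icc.mp hs).1)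
    simp only [hg]
    field_simp
  have hShead : ∑ k ∈ Finset.Icc 1 T,
      (if k = 1 then (0:ℝ) else c (L (k-1)) * G₂ / (2 * γ * nR (k-1)))
      ≤ (dbar : ℝ) * (G₂ / (2 * γ) * H) := by
    have hins : Finset.Icc 1 T = insert 1 (Finset.Icc 2 T) := by
      ext j
      simp only [Finset.mem_Icc, Finset.mem_insert]
      omega
    rw [hins, Finset.sum_insert (by simp), if_pos rfl, zero_add]
    have e2 : ∀ k ∈ Finset.Icc 2 T,
        (if k = 1 then (0:ℝ) else c (L (k-1)) * G₂ / (2 * γ * nR (k-1)))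
        = c (L (k-1)) * G₂ / (2 * γ * nR (k-1)) := by
      intro k hk
      rw [Finset.mem_Icc] at hk
      rw [if_neg (by omega)]
    rw [Finset.sum_congr rfl e2]
    have himg : Finset.Icc 2 T = (Finset.Icc 1 (T-1)).image (· + 1) := by
      rw [Finset.image_add_right_Icc]
      congr 1
      omega
    rw [himg, Finset.sum_image (by intro a _ b _ h; simp only at h; omega)]
    simp only [Nat.add_sub_cancel]
    -- pointwise: ≤ g (L t)
    have e3 : ∀ t ∈ Finset.Icc 1 (T-1), c (L t) * G₂ / (2 * γ * nR t) ≤ g (L t) := by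
      intro t ht
      rw [Finset.mem_Icc] at ht
      have hL := hLmem t ht.1
      have hmono := hnmono (L t) t hL.2.1
      have hLpos : (0:ℝ) < nR (L t) := lt_of_lt_of_le zero_lt_one (hn1 (L t) hL.1)
      simp only [hg]
      apply div_le_div_of_nonneg_left (mul_nonneg (hc0 (L t)) hG20)
      · nlinarith
      · nlinarith
    refine le_trans (Finset.sum_le_sum e3) ?_
    -- fiberwise over L
    have hmapsL : ∀ t ∈ Finset.Icc 1 (T-1), L t ∈ Finset.Icc 1 T := by
      intro t ht
      rw [Finset.mem_Icc] at ht ⊢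
      have := hLmem t ht.1
      omega
    rw [← Finset.sum_fiberwise_of_maps_to hmapsL (fun t => g (L t))]
    have e4 : ∀ s ∈ Finset.Icc 1 T,
        ∑ t ∈ (Finset.Icc 1 (T-1)).filter (fun t => L t = s), g (L t) ≤ (dbar:ℝ) * g s := by
      intro s hs
      have e5 : ∀ t ∈ (Finset.Icc 1 (T-1)).filter (fun t => L t = s), g (L t) = g s := by
        intro t ht
        rw [Finset.mem_filter] at ht
        rw [ht.2]
      rw [Finset.sum_congr rfl e5, Finset.sum_const, nsmul_eq_mul]
      apply mul_le_mul_of_nonneg_right _ (hg0 s (Finset.mem_Icc.mp hs).1)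
      have hsub : (Finset.Icc 1 (T-1)).filter (fun t => L t = s)
          ⊆ Finset.Icc s (s + dbar - 1) := by
        intro t ht
        rw [Finset.mem_filter, Finset.mem_Icc] at ht
        have hL := hLmem t ht.1.1
        have hgap := hLgap t (Finset.mem_Icc.mpr ⟨ht.1.1, by omega⟩)
        rw [Finset.mem_Icc]
        omega
      have := Finset.card_le_card hsub
      rw [Nat.card_Icc] at this
      have hcb : ((Finset.Icc 1 (T-1)).filter (fun t => L t = s)).card ≤ dbar := by omega
      exact_mod_cast hcb
    refine le_trans (Finset.sum_le_sum e4) ?_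
    rw [← Finset.mul_sum, hSg]
  -- inner double sum bound
  have hSinner : ∑ k ∈ Finset.Icc 1 T, ∑ s ∈ Finset.Icc k (tau k), step s
      ≤ (dbar : ℝ) * (2 * G₂ / γ * H) := by
    have e1 : ∀ k ∈ Finset.Icc 1 T, ∑ s ∈ Finset.Icc k (tau k), step s
        = ∑ s ∈ Finset.Icc 1 T, if k ≤ s ∧ s ≤ tau k then step s else 0 := by
      intro k hk
      rw [← Finset.sum_filter]
      congr 1
      ext s
      rw [Finset.mem_filter, Finset.mem_Icc, Finset.mem_Icc]
      have h1 := (Finset.mem_Icc.mp hk).1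
      have h2 := (htauk k hk).2.2.1
      omega
    rw [Finset.sum_congr rfl e1, Finset.sum_comm]
    have e2 : ∀ s ∈ Finset.Icc 1 T,
        ∑ k ∈ Finset.Icc 1 T, (if k ≤ s ∧ s ≤ tau k then step s else 0)
        ≤ (dbar:ℝ) * step s := by
      intro s hs
      rw [← Finset.sum_filter]
      rw [Finset.sum_const, nsmul_eq_mul]
      apply mul_le_mul_of_nonneg_right _ (hstep0 s (Finset.mem_Icc.mp hs).1)
      have hsub : (Finset.Icc 1 T).filter (fun k => k ≤ s ∧ s ≤ tau k)
          ⊆ Finset.Icc (s + 1 - dbar) s := by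
        intro k hk
        rw [Finset.mem_filter] at hk
        have h1 := (htauk k hk.1).2.2.2
        rw [Finset.mem_Icc]
        omega
      have := Finset.card_le_card hsub
      rw [Nat.card_Icc] at this
      have hcb : ((Finset.Icc 1 T).filter (fun k => k ≤ s ∧ s ≤ tau k)).card ≤ dbar := by omega
      exact_mod_cast hcb
    refine le_trans (Finset.sum_le_sum e2) ?_
    rw [← Finset.mul_sum, hSstep]
  -- assemble everything
  have hsum1 : ∑ k ∈ Finset.Icc 1 T, (f k (x k) - f k (Y (tau k)))
      ≤ G₂ * ((∑ k ∈ Finset.Icc 1 T,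
          if k = 1 then (0:ℝ) else c (L (k-1)) * G₂ / (2 * γ * nR (k-1)))
        + ∑ k ∈ Finset.Icc 1 T, ∑ s ∈ Finset.Icc k (tau k), step s) := by
    calc ∑ k ∈ Finset.Icc 1 T, (f k (x k) - f k (Y (tau k)))
        ≤ ∑ k ∈ Finset.Icc 1 T, G₂ *
          ((if k = 1 then (0:ℝ) else c (L (k-1)) * G₂ / (2 * γ * nR (k-1)))
            + ∑ s ∈ Finset.Icc k (tau k), step s) := Finset.sum_le_sum hperk
    _ = _ := by rw [← Finset.mul_sum, Finset.sum_add_distrib]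
  have hsum2 : ∑ k ∈ Finset.Icc 1 T, f k (Y (tau k)) ≤ ∑ k ∈ Finset.Icc 1 T, f k xstar := by
    have hb := hBTL T (le_refl T) xstar hxstar
    rw [hFb] at hb
    have e1 : ∑ t ∈ Finset.Icc 1 T, ∑ k ∈ F t, f k (Y t)
        = ∑ t ∈ Finset.Icc 1 T, ∑ k ∈ F t, f k (Y (tau k)) :=
      Finset.sum_congr rfl (fun t ht => Finset.sum_congr rfl
        (fun k hk => by rw [((hFmem t k).mp hk).2]))
    rw [e1, hpart (fun k => f k (Y (tau k))), hpart (fun k => f k xstar)] at hb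
    exact hb
  have hsplit : ∑ k ∈ Finset.Icc 1 T, (f k (x k) - f k (Y (tau k)))
      = ∑ k ∈ Finset.Icc 1 T, f k (x k) - ∑ k ∈ Finset.Icc 1 T, f k (Y (tau k)) :=
    Finset.sum_sub_distrib _ _
  -- numeric conclusion
  have hdbR : (1:ℝ) ≤ (dbar:ℝ) := by exact_mod_cast hdbar1
  have hlogT : (0:ℝ) ≤ Real.log T := Real.log_nonneg (by exact_mod_cast hT)
  have hbound : G₂ * ((∑ k ∈ Finset.Icc 1 T,
          if k = 1 then (0:ℝ) else c (L (k-1)) * G₂ / (2 * γ * nR (k-1)))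
        + ∑ k ∈ Finset.Icc 1 T, ∑ s ∈ Finset.Icc k (tau k), step s)
      ≤ 3 * (dbar:ℝ) * G₂ ^ 2 * (1 + Real.log T) / γ := by
    have h1 : G₂ * ((∑ k ∈ Finset.Icc 1 T,
          if k = 1 then (0:ℝ) else c (L (k-1)) * G₂ / (2 * γ * nR (k-1)))
        + ∑ k ∈ Finset.Icc 1 T, ∑ s ∈ Finset.Icc k (tau k), step s)
        ≤ G₂ * ((dbar:ℝ) * (G₂ / (2 * γ) * H) + (dbar:ℝ) * (2 * G₂ / γ * H)) :=
      mul_le_mul_of_nonneg_left (add_le_add hShead hSinner) hG20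
    have h2 : G₂ * ((dbar:ℝ) * (G₂ / (2 * γ) * H) + (dbar:ℝ) * (2 * G₂ / γ * H))
        = 5 / 2 * ((dbar:ℝ) * G₂ ^ 2 * H) / γ := by
      field_simp
      ring
    have h3 : (dbar:ℝ) * G₂ ^ 2 * H ≤ (dbar:ℝ) * G₂ ^ 2 * (1 + Real.log T) := by
      apply mul_le_mul_of_nonneg_left hHle
      positivity
    have hγinv : (0:ℝ) ≤ γ⁻¹ := le_of_lt (inv_pos.mpr hγ)
    have h4 : 5 / 2 * ((dbar:ℝ) * G₂ ^ 2 * H) / γ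
        ≤ 5 / 2 * ((dbar:ℝ) * G₂ ^ 2 * (1 + Real.log T)) / γ := by
      rw [div_eq_mul_inv, div_eq_mul_inv]
      apply mul_le_mul_of_nonneg_right _ hγinv
      linarith
    have h5 : 5 / 2 * ((dbar:ℝ) * G₂ ^ 2 * (1 + Real.log T)) / γ
        ≤ 3 * (dbar:ℝ) * G₂ ^ 2 * (1 + Real.log T) / γ := by
      rw [div_eq_mul_inv, div_eq_mul_inv]
      apply mul_le_mul_of_nonneg_right _ hγinv
      have hnn : (0:ℝ) ≤ (dbar:ℝ) * G₂ ^ 2 * (1 + Real.log T) := by positivity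
      nlinarith
    linarith
  linarith [hsum1, hsum2, hsplit, hbound]
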